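/- In the case λ = 0 (so h(t) = β + f(t)), the Newton iteration map n(t) = t - h(t)/h'(t) satisfies t* - n(t) ≤ (1/2)(t* - t) for all t ∈ [0, t*), where t* is the smallest zero of h. -/

import Mathlib

open Set
open Topology Filter

/-- For `λ = 0`, i.e. `h(t) = β + f(t)`, the Newton iteration map
`n(t) = t - h(t)/h'(t)` satisfies `t* - n(t) ≤ (1/2)(t* - t)` on `[0,t*)`. -/
theorem newton_map_linear_rate (R β : ℝ) (hR : 0 < R) (hβ : 0 < β)
    (f f' : ℝ → ℝ)
    (hder : ∀ t ∈ Ico (0:ℝ) R, HasDerivWithinAt f (f' t) (Ico (0:ℝ) R) t)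
    (hf0 : f 0 = 0) (hf'0 : f' 0 = -1)
    (hconv : ConvexOn ℝ (Ico (0:ℝ) R) f')
    (hmono : StrictMonoOn f' (Ico (0:ℝ) R))
    (h : ℝ → ℝ) (hh : h = fun t => β + f t)
    (tstar : ℝ) (htstar : tstar ∈ Ioo (0:ℝ) R) (hz : h tstar = 0)
    (hmin : ∀ t ∈ Ioo (0:ℝ) R, h t = 0 → tstar ≤ t)
    (hneg : ∀ t ∈ Ico (0:ℝ) tstar, f' t < 0) :
    ∀ t ∈ Ico (0:ℝ) tstar, tstar - (t - h t / f' t) ≤ (1/2) * (tstar - t) := by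
  obtain ⟨hts0, htsR⟩ := htstar
  have hmemts : tstar ∈ Ico (0:ℝ) R := ⟨le_of_lt hts0, htsR⟩
  have hfc : ContinuousOn f (Ico (0:ℝ) R) := fun x hx => (hder x hx).continuousWithinAt
  -- h is nonnegative on [0, tstar)
  have hpos : ∀ s ∈ Ico (0:ℝ) tstar, 0 ≤ h s := by
    intro s hs
    by_contra hcon
    push_neg at hcon
    have hsub : Icc (0:ℝ) s ⊆ Ico 0 R := fun x hx =>
      ⟨hx.1, lt_of_le_of_lt hx.2 (lt_trans hs.2 htsR)⟩
    have hchc : ContinuousOn h (Icc 0 s) := by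
      rw [hh]; exact continuousOn_const.add (hfc.mono hsub)
    have hmem : (0:ℝ) ∈ Icc (h s) (h 0) := by
      constructor
      · exact le_of_lt hcon
      · rw [hh]; simp [hf0]; linarith
    obtain ⟨c, hc, hc0⟩ := intermediate_value_Icc' hs.1 hchc hmem
    have hcpos : 0 < c := by
      rcases hc.1.lt_or_eq with h1 | h1
      · exact h1
      · exfalso; rw [← h1, hh] at hc0; simp [hf0] at hc0; linarith
    have : tstar ≤ c :=
      hmin c ⟨hcpos, lt_of_le_of_lt hc.2 (lt_trans hs.2 htsR)⟩ hc0
    linarith [hc.2, hs.2]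
  -- f' tstar ≤ 0 via one-sided slopes
  have hfts : f' tstar ≤ 0 := by
    have hd : HasDerivWithinAt h (f' tstar) (Ico 0 tstar) tstar := by
      rw [hh]
      exact ((hder tstar hmemts).const_add β).mono
        (fun x hx => ⟨hx.1, lt_trans hx.2 htsR⟩)
    have hslope := hasDerivWithinAt_iff_tendsto_slope.mp hd
    have hne : (𝓝[Ico (0:ℝ) tstar \ {tstar}] tstar).NeBot := by
      rw [diff_singleton_eq_self (by simp)]
      refine mem_closure_iff_nhdsWithin_neBot.mp ?_
      rw [closure_Ico (ne_of_lt hts0)]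
      exact ⟨le_of_lt hts0, le_refl _⟩
    refine le_of_tendsto hslope ?_
    filter_upwards [self_mem_nhdsWithin] with s hs
    have hs' : s ∈ Ico (0:ℝ) tstar := hs.1
    have hslt : s - tstar ≤ 0 := by linarith [hs'.2]
    have : slope h tstar s = h s / (s - tstar) := by
      rw [slope_def_field, hz]; ring_nf
    rw [this]
    exact div_nonpos_of_nonneg_of_nonpos (hpos s hs') hslt
  intro t ht
  obtain ⟨ht0, httstar⟩ := ht
  have htR : t < R := lt_trans httstar htsR
  have hmemt : t ∈ Ico (0:ℝ) R := ⟨ht0, htR⟩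
  have hft : f' t < 0 := hneg t ⟨ht0, httstar⟩
  have hts' : 0 < tstar - t := sub_pos.mpr httstar
  have htne : tstar - t ≠ 0 := ne_of_gt hts'
  -- key trapezoid-type inequality
  set K := (f' tstar - f' t) / (tstar - t) with hK
  set g : ℝ → ℝ := fun s => f' t * (s - t) + K * (s - t)^2 / 2 - f s with hg
  have hds : ∀ s ∈ Ioo t tstar, HasDerivAt g (f' t + K * (s - t) - f' s) s := by
    intro s hs
    have hsR : s ∈ Ico (0:ℝ) R := ⟨le_trans ht0 hs.1.le, lt_trans hs.2 htsR⟩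
    have hf : HasDerivAt f (f' s) s :=
      (hder s hsR).hasDerivAt (Ico_mem_nhds (lt_of_le_of_lt ht0 hs.1) (lt_trans hs.2 htsR))
    have h1 : HasDerivAt (fun s : ℝ => s - t) 1 s := (hasDerivAt_id s).sub_const t
    have hq : HasDerivAt (fun s : ℝ => (s - t)^2) (2*(s-t)) s := by
      simpa using h1.fun_pow 2
    have hp := ((h1.const_mul (f' t)).add ((hq.const_mul K).div_const 2)).sub hf
    exact hp.congr_deriv (by ring)
  have hmono' : MonotoneOn g (Icc t tstar) := by
    apply monotoneOn_of_deriv_nonneg (convex_Icc t tstar)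
    · apply ContinuousOn.sub
      · fun_prop
      · exact hfc.mono (fun x hx => ⟨le_trans ht0 hx.1, lt_of_le_of_lt hx.2 htsR⟩)
    · rw [interior_Icc]
      exact fun s hs => ((hds s hs).differentiableAt).differentiableWithinAt
    · rw [interior_Icc]
      intro s hs
      rw [(hds s hs).deriv]
      -- convexity of f'
      have ha : (0:ℝ) ≤ (tstar - s) / (tstar - t) := by
        apply div_nonneg <;> linarith [hs.2, hs.1]
      have hb : (0:ℝ) ≤ (s - t) / (tstar - t) := by
        apply div_nonneg <;> linarith [hs.1]
      have hab : (tstar - s) / (tstar - t) + (s - t) / (tstar - t) = 1 := by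
        field_simp
        ring
      have hcx := hconv.2 hmemt hmemts ha hb hab
      have heq : ((tstar - s) / (tstar - t)) • t + ((s - t) / (tstar - t)) • tstar = s := by
        simp only [smul_eq_mul]
        field_simp
        ring
      rw [heq] at hcx
      simp only [smul_eq_mul] at hcx
      have : (tstar - s) / (tstar - t) * f' t + (s - t) / (tstar - t) * f' tstar
          = f' t + K * (s - t) := by
        rw [hK]; field_simp; ring
      rw [this] at hcx
      linarith
  have hgle : g t ≤ g tstar :=
    hmono' ⟨le_refl t, le_of_lt httstar⟩ ⟨le_of_lt httstar, le_refl tstar⟩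
      (le_of_lt httstar)
  have hKe : K * (tstar - t)^2 / 2 = (f' tstar - f' t) * (tstar - t) / 2 := by
    rw [hK]; field_simp
  have key : f tstar - f t ≤ (tstar - t) * (f' t + f' tstar) / 2 := by
    have h1 : g t = -f t := by simp [hg]
    have h2 : g tstar = f' t * (tstar - t) + K * (tstar - t)^2 / 2 - f tstar := rfl
    rw [h1, h2, hKe] at hgle
    linarith
  have hht : h t = f t - f tstar := by
    rw [hh] at hz ⊢
    simp only at hz ⊢
    linarith
  have hhge : (tstar - t)/2 * (-f' t) ≤ h t := by
    rw [hht]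
    nlinarith [key, hfts, hts']
  have hdiv : h t / f' t ≤ -(tstar - t)/2 := by
    rw [div_le_iff_of_neg hft]
    nlinarith [hhge]
  linarith
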